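/- Let n and k be integers with n ≥ 2k ≥ 2. A set S of vertices of the Johnson graph J(n,k) is a resolving set for J(n,k) if and only if for any two disjoint non-empty subsets U, W of {1,...,n} with |U| = |W| ≤ k, there exists a vertex X ∈ S satisfying |X ∩ U| ≠ |X ∩ W|. -/

import Mathlib

/-- The Johnson graph `J(n,k)`: vertices are the `k`-element subsets of `{1,...,n}`,
two vertices adjacent iff their intersection has `k-1` elements. -/
def johnsonGraph (n k : ℕ) : SimpleGraph {s : Finset (Fin n) // s.card = k} where
  Adj U W := U ≠ W ∧ (U.1 ∩ W.1).card = k - 1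
  symm := by
    constructor
    intro U W h
    exact ⟨h.1.symm, by rw [Finset.inter_comm]; exact h.2⟩
  loopless := by
    constructor
    intro U h
    exact h.1 rfl

/-- The Kneser graph `K(n,k)`: vertices are the `k`-element subsets of `{1,...,n}`,
two vertices adjacent iff the corresponding subsets are disjoint. -/
def kneserGraph (n k : ℕ) : SimpleGraph {s : Finset (Fin n) // s.card = k} where
  Adj U W := U ≠ W ∧ Disjoint U.1 W.1
  symm := by
    constructor
    intro U W h
    exact ⟨h.1.symm, h.2.symm⟩
  loopless := by
    constructor
    intro U h
    exact h.1 rfl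

/-- A set `S` of vertices is a resolving set for `G` if every pair of distinct
vertices is resolved by some vertex of `S`, i.e. is at different distances from it. -/
def resolvingSet {V : Type*} (G : SimpleGraph V) (S : Set V) : Prop :=
  ∀ u v : V, u ≠ v → ∃ x ∈ S, G.dist u x ≠ G.dist v x

/-- The metric dimension `β(G)`: the minimum cardinality of a resolving set for `G`. -/
noncomputable def metricDim {V : Type*} (G : SimpleGraph V) : ℕ :=
  sInf {m | ∃ S : Finset V, resolvingSet G ↑S ∧ S.card = m}

namespace JohnsonAux

variable {n k : ℕ}

lemma eq_of_card_inter (A B : {s : Finset (Fin n) // s.card = k})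
    (h : k ≤ (A.1 ∩ B.1).card) : A = B := by
  have h2 : A.1 ∩ B.1 = A.1 :=
    Finset.eq_of_subset_of_card_le Finset.inter_subset_left (by rw [A.2]; exact h)
  have h3 : A.1 ⊆ B.1 := by rw [← h2]; exact Finset.inter_subset_right
  exact Subtype.ext (Finset.eq_of_subset_of_card_le h3 (by rw [A.2, B.2]))

lemma exists_walk (B : {s : Finset (Fin n) // s.card = k}) :
    ∀ d (A : {s : Finset (Fin n) // s.card = k}), k - (A.1 ∩ B.1).card ≤ d →
    ∃ p : (johnsonGraph n k).Walk A B, p.length = k - (A.1 ∩ B.1).card := by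
  intro d
  induction d with
  | zero =>
    intro A h
    have hAB : A = B := eq_of_card_inter A B (by omega)
    subst hAB
    refine ⟨SimpleGraph.Walk.nil, ?_⟩
    simp [Finset.inter_self, A.2]
  | succ d ih =>
    intro A h
    by_cases hc : k ≤ (A.1 ∩ B.1).card
    · have hAB : A = B := eq_of_card_inter A B hc
      subst hAB
      refine ⟨SimpleGraph.Walk.nil, ?_⟩
      simp [Finset.inter_self, A.2]
    · push_neg at hc
      -- pick a ∈ A \ B, b ∈ B \ A
      have hA : (A.1 \ B.1).Nonempty := by
        rw [Finset.sdiff_nonempty]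
        intro hsub
        have : A.1 ∩ B.1 = A.1 := by
          rw [Finset.inter_eq_left]; exact hsub
        rw [this, A.2] at hc; omega
      have hB : (B.1 \ A.1).Nonempty := by
        rw [Finset.sdiff_nonempty]
        intro hsub
        have : A.1 ∩ B.1 = B.1 := by
          rw [Finset.inter_eq_right]; exact hsub
        rw [this, B.2] at hc; omega
      obtain ⟨a, ha⟩ := hA
      obtain ⟨b, hb⟩ := hB
      rw [Finset.mem_sdiff] at ha hb
      have hk1 : 1 ≤ k := by
        rcases Nat.eq_zero_or_pos k with h0 | h0
        · exfalso
          have hAe : A.1 = ∅ := Finset.card_eq_zero.1 (by rw [A.2, h0])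
          rw [hAe] at ha; exact absurd ha.1 (Finset.notMem_empty a)
        · exact h0
      have hbA : b ∉ A.1 := hb.2
      have haeq : (A.1.erase a).card = k - 1 := by
        rw [Finset.card_erase_of_mem ha.1, A.2]
      set A' : {s : Finset (Fin n) // s.card = k} :=
        ⟨insert b (A.1.erase a), by
          rw [Finset.card_insert_of_notMem (fun hmem => hbA (Finset.mem_of_mem_erase hmem)),
            haeq]; omega⟩ with hA'
      have hinter : A.1 ∩ A'.1 = A.1.erase a := by
        ext x
        simp only [hA', Finset.mem_inter, Finset.mem_insert, Finset.mem_erase]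
        constructor
        · rintro ⟨hx, hx' | hx'⟩
          · exact absurd (hx' ▸ hx) hbA
          · exact hx'
        · rintro ⟨hx1, hx2⟩; exact ⟨hx2, Or.inr ⟨hx1, hx2⟩⟩
      have hadj : (johnsonGraph n k).Adj A A' := by
        refine ⟨?_, by rw [hinter, haeq]⟩
        intro heq
        have : a ∈ A'.1 := heq ▸ ha.1
        simp only [hA', Finset.mem_insert, Finset.mem_erase] at this
        rcases this with h1 | h1
        · exact hbA (h1 ▸ ha.1)
        · exact h1.1 rfl
      have hcard' : (A'.1 ∩ B.1).card = (A.1 ∩ B.1).card + 1 := by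
        have h1 : A'.1 ∩ B.1 = insert b (A.1.erase a ∩ B.1) :=
          Finset.insert_inter_of_mem hb.1
        have h2 : A.1.erase a ∩ B.1 = A.1 ∩ B.1 := by
          ext x
          simp only [Finset.mem_inter, Finset.mem_erase]
          constructor
          · rintro ⟨⟨_, hx⟩, hx'⟩; exact ⟨hx, hx'⟩
          · rintro ⟨hx, hx'⟩
            exact ⟨⟨fun hxa => ha.2 (hxa ▸ hx'), hx⟩, hx'⟩
        rw [h1, h2, Finset.card_insert_of_notMem]
        intro hmem
        exact hbA (Finset.mem_inter.1 hmem).1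
      obtain ⟨p', hp'⟩ := ih A' (by omega)
      refine ⟨SimpleGraph.Walk.cons hadj p', ?_⟩
      rw [SimpleGraph.Walk.length_cons, hp', hcard']
      omega

lemma card_inter_le_of_adj (A C B : {s : Finset (Fin n) // s.card = k})
    (h : (johnsonGraph n k).Adj A C) :
    (C.1 ∩ B.1).card ≤ (A.1 ∩ B.1).card + 1 := by
  have hsub : C.1 ∩ B.1 ⊆ (A.1 ∩ B.1) ∪ (C.1 \ A.1) := by
    intro x hx
    rw [Finset.mem_inter] at hx
    rw [Finset.mem_union, Finset.mem_inter, Finset.mem_sdiff]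
    by_cases hxA : x ∈ A.1
    · exact Or.inl ⟨hxA, hx.2⟩
    · exact Or.inr ⟨hx.1, hxA⟩
  have hCA : (C.1 \ A.1).card ≤ 1 := by
    have h1 : (C.1 ∩ A.1).card + (C.1 \ A.1).card = C.1.card :=
      Finset.card_inter_add_card_sdiff C.1 A.1
    have h2 : (C.1 ∩ A.1).card = k - 1 := by
      rw [Finset.inter_comm]; exact h.2
    have hk1 : 1 ≤ k := by
      rcases Nat.eq_zero_or_pos k with h0 | h0
      · exfalso
        apply h.1
        apply Subtype.ext
        have hA : A.1 = ∅ := Finset.card_eq_zero.1 (by rw [A.2, h0])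
        have hC : C.1 = ∅ := Finset.card_eq_zero.1 (by rw [C.2, h0])
        rw [hA, hC]
      · exact h0
    rw [C.2] at h1; omega
  calc (C.1 ∩ B.1).card ≤ ((A.1 ∩ B.1) ∪ (C.1 \ A.1)).card := Finset.card_le_card hsub
    _ ≤ (A.1 ∩ B.1).card + (C.1 \ A.1).card := Finset.card_union_le _ _
    _ ≤ (A.1 ∩ B.1).card + 1 := by omega

lemma walk_lb :
    ∀ {A B : {s : Finset (Fin n) // s.card = k}} (p : (johnsonGraph n k).Walk A B),
      k ≤ (A.1 ∩ B.1).card + p.length := by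
  intro A B p
  induction p with
  | @nil u => simp [Finset.inter_self, u.2]
  | @cons u v w h p ih =>
    rw [SimpleGraph.Walk.length_cons]
    have := card_inter_le_of_adj u v w h
    omega

lemma johnson_dist (A B : {s : Finset (Fin n) // s.card = k}) :
    (johnsonGraph n k).dist A B = k - (A.1 ∩ B.1).card := by
  obtain ⟨p, hp⟩ := exists_walk B _ A le_rfl
  have h1 : (johnsonGraph n k).dist A B ≤ k - (A.1 ∩ B.1).card :=
    hp ▸ SimpleGraph.dist_le p
  obtain ⟨q, hq⟩ := p.reachable.exists_walk_length_eq_dist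
  have h2 := walk_lb q
  rw [hq] at h2
  have h3 : (A.1 ∩ B.1).card ≤ k := by
    have hsub : A.1 ∩ B.1 ⊆ A.1 := Finset.inter_subset_left
    have := Finset.card_le_card hsub
    rw [A.2] at this; exact this
  omega

end JohnsonAux

open JohnsonAux

/-- For `n ≥ 2k ≥ 2`, a set `S` of vertices of the Johnson graph `J(n,k)` is a
resolving set iff for any two disjoint non-empty subsets `U, W` of `{1,...,n}`
with `|U| = |W| ≤ k`, there is a vertex `X ∈ S` with `|X ∩ U| ≠ |X ∩ W|`. -/
theorem johnson_resolving_iff (n k : ℕ) (hk : 2 ≤ 2 * k) (hn : 2 * k ≤ n)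
    (S : Set {s : Finset (Fin n) // s.card = k}) :
    resolvingSet (johnsonGraph n k) S ↔
      ∀ U W : Finset (Fin n), U.Nonempty → W.Nonempty → Disjoint U W →
        U.card = W.card → U.card ≤ k →
        ∃ X ∈ S, (X.1 ∩ U).card ≠ (X.1 ∩ W).card := by
  have hcard_le : ∀ X A : {s : Finset (Fin n) // s.card = k}, (X.1 ∩ A.1).card ≤ k := by
    intro X A
    have hsub : X.1 ∩ A.1 ⊆ X.1 := Finset.inter_subset_left
    have := Finset.card_le_card hsub
    rw [X.2] at this; exact this
  constructor
  · intro hres U W hU hW hUW hcard hle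
    -- build k-sets A = U ∪ T, B = W ∪ T
    set c := U.card with hc
    have hRcard : k - c ≤ (Finset.univ \ (U ∪ W) : Finset (Fin n)).card := by
      rw [Finset.card_sdiff_of_subset (Finset.subset_univ _), Finset.card_union_of_disjoint hUW,
        Finset.card_univ, Fintype.card_fin]
      omega
    obtain ⟨T, hTsub, hTcard⟩ := Finset.exists_subset_card_eq hRcard
    have hTU : Disjoint U T := by
      refine Finset.disjoint_left.2 fun x hxU hxT => ?_
      have := hTsub hxT
      rw [Finset.mem_sdiff] at this
      exact this.2 (Finset.mem_union_left _ hxU)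
    have hTW : Disjoint W T := by
      refine Finset.disjoint_left.2 fun x hxW hxT => ?_
      have := hTsub hxT
      rw [Finset.mem_sdiff] at this
      exact this.2 (Finset.mem_union_right _ hxW)
    set A : {s : Finset (Fin n) // s.card = k} :=
      ⟨U ∪ T, by rw [Finset.card_union_of_disjoint hTU, hTcard]; omega⟩ with hA
    set B : {s : Finset (Fin n) // s.card = k} :=
      ⟨W ∪ T, by rw [Finset.card_union_of_disjoint hTW, hTcard]; omega⟩ with hB
    have hAB : A ≠ B := by
      obtain ⟨u, hu⟩ := hU
      intro heq
      have huA : u ∈ A.1 := Finset.mem_union_left _ hu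
      rw [heq] at huA
      simp only [hB, Finset.mem_union] at huA
      rcases huA with h1 | h1
      · exact Finset.disjoint_left.1 hUW hu h1
      · exact Finset.disjoint_left.1 hTU hu h1
    obtain ⟨X, hXS, hX⟩ := hres A B hAB
    refine ⟨X, hXS, ?_⟩
    rw [johnson_dist, johnson_dist] at hX
    have hXA : (X.1 ∩ A.1).card = (X.1 ∩ U).card + (X.1 ∩ T).card := by
      show (X.1 ∩ (U ∪ T)).card = _
      rw [Finset.inter_union_distrib_left, Finset.card_union_of_disjoint
        (Finset.disjoint_of_subset_left Finset.inter_subset_right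
          (Finset.disjoint_of_subset_right Finset.inter_subset_right hTU))]
    have hXB : (X.1 ∩ B.1).card = (X.1 ∩ W).card + (X.1 ∩ T).card := by
      show (X.1 ∩ (W ∪ T)).card = _
      rw [Finset.inter_union_distrib_left, Finset.card_union_of_disjoint
        (Finset.disjoint_of_subset_left Finset.inter_subset_right
          (Finset.disjoint_of_subset_right Finset.inter_subset_right hTW))]
    have h1 := hcard_le X A
    have h2 := hcard_le X B
    have e1 : (A.1 ∩ X.1).card = (X.1 ∩ A.1).card := by rw [Finset.inter_comm]
    have e2 : (B.1 ∩ X.1).card = (X.1 ∩ B.1).card := by rw [Finset.inter_comm]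
    omega
  · intro hcond A B hAB
    have hne : A.1 ≠ B.1 := fun h => hAB (Subtype.ext h)
    set U := A.1 \ B.1 with hU
    set W := B.1 \ A.1 with hW
    have hUne : U.Nonempty := by
      rw [hU, Finset.sdiff_nonempty]
      intro hsub
      exact hne (Finset.eq_of_subset_of_card_le hsub (by rw [A.2, B.2]))
    have hWne : W.Nonempty := by
      rw [hW, Finset.sdiff_nonempty]
      intro hsub
      exact hne (Finset.eq_of_subset_of_card_le hsub (by rw [A.2, B.2])).symm
    have hdis : Disjoint U W := by
      refine Finset.disjoint_left.2 fun x hxU hxW => ?_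
      rw [hU, Finset.mem_sdiff] at hxU
      rw [hW, Finset.mem_sdiff] at hxW
      exact hxU.2 hxW.1
    have hUc : (A.1 ∩ B.1).card + U.card = k := by
      rw [hU]
      have := Finset.card_inter_add_card_sdiff A.1 B.1
      rw [A.2] at this; exact this
    have hWc : (A.1 ∩ B.1).card + W.card = k := by
      rw [hW, Finset.inter_comm]
      have := Finset.card_inter_add_card_sdiff B.1 A.1
      rw [B.2] at this; exact this
    obtain ⟨X, hXS, hX⟩ := hcond U W hUne hWne hdis (by omega) (by omega)
    refine ⟨X, hXS, ?_⟩
    rw [johnson_dist, johnson_dist]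
    have hAsplit : A.1 = (A.1 ∩ B.1) ∪ U := by
      rw [hU]
      ext x
      simp only [Finset.mem_union, Finset.mem_inter, Finset.mem_sdiff]
      tauto
    have hBsplit : B.1 = (A.1 ∩ B.1) ∪ W := by
      rw [hW]
      ext x
      simp only [Finset.mem_union, Finset.mem_inter, Finset.mem_sdiff]
      tauto
    have hXA : (X.1 ∩ A.1).card = (X.1 ∩ (A.1 ∩ B.1)).card + (X.1 ∩ U).card := by
      have hsplit : X.1 ∩ A.1 = (X.1 ∩ (A.1 ∩ B.1)) ∪ (X.1 ∩ U) := by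
        ext x
        simp only [hU, Finset.mem_inter, Finset.mem_union, Finset.mem_sdiff]
        tauto
      rw [hsplit, Finset.card_union_of_disjoint]
      refine Finset.disjoint_left.2 fun x hx1 hx2 => ?_
      rw [Finset.mem_inter, Finset.mem_inter] at hx1
      rw [hU, Finset.mem_inter, Finset.mem_sdiff] at hx2
      exact hx2.2.2 hx1.2.2
    have hXB : (X.1 ∩ B.1).card = (X.1 ∩ (A.1 ∩ B.1)).card + (X.1 ∩ W).card := by
      have hsplit : X.1 ∩ B.1 = (X.1 ∩ (A.1 ∩ B.1)) ∪ (X.1 ∩ W) := by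
        ext x
        simp only [hW, Finset.mem_inter, Finset.mem_union, Finset.mem_sdiff]
        tauto
      rw [hsplit, Finset.card_union_of_disjoint]
      refine Finset.disjoint_left.2 fun x hx1 hx2 => ?_
      rw [Finset.mem_inter, Finset.mem_inter] at hx1
      rw [hW, Finset.mem_inter, Finset.mem_sdiff] at hx2
      exact hx2.2.2 hx1.2.1
    have h1 := hcard_le X A
    have h2 := hcard_le X B
    have e1 : (A.1 ∩ X.1).card = (X.1 ∩ A.1).card := by rw [Finset.inter_comm]
    have e2 : (B.1 ∩ X.1).card = (X.1 ∩ B.1).card := by rw [Finset.inter_comm]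
    omega
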